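/- arXiv:2408.12683 — 2 statements merged into one kernel-verified Lean document; each statement's English description precedes it below -/
import Mathlib

section
/- Let (Ω, F, P) be a probability space with a filtration F_0 ⊆ F_1 ⊆ … ⊆ F_n of sub-σ-algebras where F_0 is the trivial σ-algebra, and let Y be an integrable, F_n-measurable real random variable. For i = 1, …, n set D_i = E[Y | F_i] − E[Y | F_{i−1}]. Suppose there are constants c_1, …, c_n > 0 with |D_i| ≤ c_i almost surely, and let V > 0 satisfy V ≥ Σ_{i=1}^n ess sup E[D_i² | F_{i−1}]. Then for every ε with 0 < ε ≤ 2V / max_i c_i, one has P(|Y − E[Y]| > ε) ≤ 2 exp(−ε² / (4V)). -/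
open MeasureTheory Real

lemma exp_le_one_add_add_sq {x : ℝ} (hx : |x| ≤ 1) : Real.exp x ≤ 1 + x + x ^ 2 := by
  have h := Real.exp_bound hx (n := 2) (by norm_num)
  have h2 : |Real.exp x - (1 + x)| ≤ |x| ^ 2 * (3 / 4) := by
    convert h using 2
    · simp [Finset.sum_range_succ]
    · norm_num
  have h3 : Real.exp x ≤ 1 + x + |x| ^ 2 * (3 / 4) := by
    have := abs_le.mp h2
    linarith [this.2]
  calc Real.exp x ≤ 1 + x + |x| ^ 2 * (3 / 4) := h3
    _ ≤ 1 + x + x ^ 2 := by rw [sq_abs]; nlinarith [sq_nonneg x]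

lemma onestep {Ω : Type*} [m0 : MeasurableSpace Ω] {P : Measure Ω} [IsProbabilityMeasure P]
    {G : MeasurableSpace Ω} (hG : G ≤ m0)
    {D : Ω → ℝ} (hDm : AEStronglyMeasurable[m0] D P) {c : ℝ}
    (hbdd : ∀ᵐ ω ∂P, |D ω| ≤ c)
    (h0 : P[D|G] =ᵐ[P] 0)
    {t : ℝ} (ht : |t| * c ≤ 1)
    {v : ℝ} (hv : P[(fun ω => D ω ^ 2)|G] ≤ᵐ[P] fun _ => v) :
    P[(fun ω => Real.exp (t * D ω))|G] ≤ᵐ[P] fun _ => Real.exp (t ^ 2 * v) := by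
  have hDi : Integrable D P := by
    refine (integrable_const c).mono' hDm ?_
    filter_upwards [hbdd] with ω h using by simpa [Real.norm_eq_abs] using h
  have hD2m : AEStronglyMeasurable[m0] (fun ω => D ω ^ 2) P := by
    simp only [sq]; exact hDm.mul hDm
  have hD2i : Integrable (fun ω => D ω ^ 2) P := by
    refine (integrable_const (c ^ 2)).mono' hD2m ?_
    filter_upwards [hbdd] with ω h
    simp only [Real.norm_eq_abs, abs_pow, sq_abs]
    calc D ω ^ 2 = |D ω| ^ 2 := (sq_abs _).symm
      _ ≤ c ^ 2 := by nlinarith [abs_nonneg (D ω)]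
  have hexpm : AEStronglyMeasurable[m0] (fun ω => Real.exp (t * D ω)) P :=
    Real.continuous_exp.comp_aestronglyMeasurable (hDm.const_mul t)
  have hexpi : Integrable (fun ω => Real.exp (t * D ω)) P := by
    refine (integrable_const (Real.exp (|t| * c))).mono' hexpm ?_
    filter_upwards [hbdd] with ω h
    rw [Real.norm_eq_abs, Real.abs_exp]
    refine Real.exp_le_exp.mpr ?_
    calc t * D ω ≤ |t * D ω| := le_abs_self _
      _ = |t| * |D ω| := abs_mul _ _
      _ ≤ |t| * c := by nlinarith [abs_nonneg t, abs_nonneg (D ω)]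
  have hlini : Integrable (fun ω => 1 + t * D ω + t ^ 2 * D ω ^ 2) P :=
    ((integrable_const 1).add (hDi.const_mul t)).add (hD2i.const_mul (t ^ 2))
  have hpt : ∀ᵐ ω ∂P, Real.exp (t * D ω) ≤ 1 + t * D ω + t ^ 2 * D ω ^ 2 := by
    filter_upwards [hbdd] with ω h
    have habs : |t * D ω| ≤ 1 := by
      rw [abs_mul]
      calc |t| * |D ω| ≤ |t| * c := by nlinarith [abs_nonneg t, abs_nonneg (D ω)]
        _ ≤ 1 := ht
    have := exp_le_one_add_add_sq habs
    calc Real.exp (t * D ω) ≤ 1 + t * D ω + (t * D ω) ^ 2 := this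
      _ = 1 + t * D ω + t ^ 2 * D ω ^ 2 := by ring
  have hmono := condExp_mono (μ := P) (m := G) hexpi hlini hpt
  have hsplit :
      P[(fun ω => 1 + t * D ω + t ^ 2 * D ω ^ 2)|G] =ᵐ[P]
        fun ω => 1 + t * (P[D|G]) ω + t ^ 2 * (P[(fun ω => D ω ^ 2)|G]) ω := by
    have hfe : (fun ω => 1 + t * D ω + t ^ 2 * D ω ^ 2) =
        (fun ω => 1 + t * D ω) + fun ω => t ^ 2 * D ω ^ 2 := rfl
    have h1 := condExp_add (μ := P) (m := G)
      ((integrable_const (1 : ℝ)).add (hDi.const_mul t)) (hD2i.const_mul (t ^ 2))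
    have hfe2 : (fun ω => 1 + t * D ω) = (fun _ => (1 : ℝ)) + fun ω => t * D ω := rfl
    have h2 := condExp_add (μ := P) (m := G) (integrable_const (1 : ℝ)) (hDi.const_mul t)
    have h3 : P[(fun ω => t * D ω)|G] =ᵐ[P] fun ω => t * (P[D|G]) ω := by
      exact condExp_smul (μ := P) (m := G) t D
    have h4 : P[(fun ω => t ^ 2 * D ω ^ 2)|G] =ᵐ[P]
        fun ω => t ^ 2 * (P[(fun ω => D ω ^ 2)|G]) ω := by
      exact condExp_smul (μ := P) (m := G) (t ^ 2) (fun ω => D ω ^ 2)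
    rw [hfe, hfe2]
    refine h1.trans ?_
    filter_upwards [h2, h3, h4] with ω e2 e3 e4
    simp only [Pi.add_apply] at *
    rw [e2, e3, e4, condExp_const hG]
  filter_upwards [hmono, hsplit, h0, hv] with ω h1 h2 h3 h4
  rw [h2] at h1
  simp only [Pi.zero_apply] at h3
  rw [h3] at h1
  have h5 : t ^ 2 * (P[(fun ω => D ω ^ 2)|G]) ω ≤ t ^ 2 * v := by
    nlinarith [sq_nonneg t]
  have h6 : t ^ 2 * v + 1 ≤ Real.exp (t ^ 2 * v) := Real.add_one_le_exp _
  calc (P[(fun ω => Real.exp (t * D ω))|G]) ω ≤ 1 + t * 0 + t ^ 2 * (P[(fun ω => D ω ^ 2)|G]) ω := h1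
    _ ≤ Real.exp (t ^ 2 * v) := by linarith

lemma chernoff_ind {Ω : Type*} [m0 : MeasurableSpace Ω] {P : Measure Ω} [IsProbabilityMeasure P]
    (n : ℕ) (F : ℕ → MeasurableSpace Ω) (hF_le : ∀ i, F i ≤ m0) (hF_mono : Monotone F)
    (D : ℕ → Ω → ℝ) (c : ℕ → ℝ)
    (hDmeas : ∀ i ∈ Finset.Icc 1 n, StronglyMeasurable[F i] (D i))
    (hbdd : ∀ i ∈ Finset.Icc 1 n, ∀ᵐ ω ∂P, |D i ω| ≤ c i)
    (h0 : ∀ i ∈ Finset.Icc 1 n, P[D i|F (i - 1)] =ᵐ[P] 0)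
    (t : ℝ) (ht : ∀ i ∈ Finset.Icc 1 n, |t| * c i ≤ 1)
    (v : ℕ → ℝ)
    (hv : ∀ i ∈ Finset.Icc 1 n, P[(fun ω => D i ω ^ 2)|F (i - 1)] ≤ᵐ[P] fun _ => v i) :
    ∀ k, k ≤ n → ∫ ω, Real.exp (t * ∑ i ∈ Finset.Icc 1 k, D i ω) ∂P ≤
      Real.exp (t ^ 2 * ∑ i ∈ Finset.Icc 1 k, v i) := by
  -- auxiliary facts about partial sums
  have hSmeas : ∀ k ≤ n, StronglyMeasurable[F k] (fun ω => ∑ i ∈ Finset.Icc 1 k, D i ω) := by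
    intro k hk
    refine Finset.stronglyMeasurable_fun_sum _ fun i hi => ?_
    have hi' : i ∈ Finset.Icc 1 n := by
      simp only [Finset.mem_Icc] at *; exact ⟨hi.1, hi.2.trans hk⟩
    exact (hDmeas i hi').mono (hF_mono (Finset.mem_Icc.mp hi).2)
  have hSbdd : ∀ k ≤ n, ∀ᵐ ω ∂P,
      |∑ i ∈ Finset.Icc 1 k, D i ω| ≤ ∑ i ∈ Finset.Icc 1 k, c i := by
    intro k hk
    have : ∀ᵐ ω ∂P, ∀ i ∈ Finset.Icc 1 k, |D i ω| ≤ c i := by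
      rw [Filter.eventually_all_finset]
      intro i hi
      refine hbdd i ?_
      simp only [Finset.mem_Icc] at *
      exact ⟨hi.1, hi.2.trans hk⟩
    filter_upwards [this] with ω h
    exact (Finset.abs_sum_le_sum_abs _ _).trans (Finset.sum_le_sum h)
  have hexpSm : ∀ k ≤ n, AEStronglyMeasurable
      (fun ω => Real.exp (t * ∑ i ∈ Finset.Icc 1 k, D i ω)) P := fun k hk =>
    Real.continuous_exp.comp_aestronglyMeasurable
      ((((hSmeas k hk).mono (hF_le k)).aestronglyMeasurable).const_mul t)
  have hexpSi : ∀ k ≤ n, Integrable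
      (fun ω => Real.exp (t * ∑ i ∈ Finset.Icc 1 k, D i ω)) P := by
    intro k hk
    refine (integrable_const (Real.exp (|t| * ∑ i ∈ Finset.Icc 1 k, c i))).mono'
      (hexpSm k hk) ?_
    filter_upwards [hSbdd k hk] with ω h
    rw [Real.norm_eq_abs, Real.abs_exp]
    refine Real.exp_le_exp.mpr ?_
    calc t * ∑ i ∈ Finset.Icc 1 k, D i ω ≤ |t * ∑ i ∈ Finset.Icc 1 k, D i ω| := le_abs_self _
      _ = |t| * |∑ i ∈ Finset.Icc 1 k, D i ω| := abs_mul _ _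
      _ ≤ |t| * ∑ i ∈ Finset.Icc 1 k, c i := by
          nlinarith [abs_nonneg t, abs_nonneg (∑ i ∈ Finset.Icc 1 k, D i ω)]
  intro k
  induction k with
  | zero => intro _; simp
  | succ k ih =>
    intro hk1
    have hk : k ≤ n := Nat.le_of_succ_le hk1
    have hmem : k + 1 ∈ Finset.Icc 1 n := Finset.mem_Icc.mpr ⟨Nat.succ_le_succ (Nat.zero_le _), hk1⟩
    set f : Ω → ℝ := fun ω => Real.exp (t * ∑ i ∈ Finset.Icc 1 k, D i ω) with hfdef
    set g : Ω → ℝ := fun ω => Real.exp (t * D (k + 1) ω) with hgdef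
    have hDm : AEStronglyMeasurable (D (k + 1)) P :=
      ((hDmeas _ hmem).mono (hF_le _)).aestronglyMeasurable
    have hgm : AEStronglyMeasurable g P :=
      Real.continuous_exp.comp_aestronglyMeasurable (hDm.const_mul t)
    have hgi : Integrable g P := by
      refine (integrable_const (Real.exp (|t| * c (k + 1)))).mono' hgm ?_
      filter_upwards [hbdd _ hmem] with ω h
      rw [Real.norm_eq_abs, Real.abs_exp]
      refine Real.exp_le_exp.mpr ?_
      calc t * D (k + 1) ω ≤ |t * D (k + 1) ω| := le_abs_self _
        _ = |t| * |D (k + 1) ω| := abs_mul _ _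
        _ ≤ |t| * c (k + 1) := by nlinarith [abs_nonneg t, abs_nonneg (D (k + 1) ω)]
    have hfbdd : ∀ᵐ ω ∂P, ‖f ω‖ ≤ Real.exp (|t| * ∑ i ∈ Finset.Icc 1 k, c i) := by
      filter_upwards [hSbdd k hk] with ω h
      rw [Real.norm_eq_abs, Real.abs_exp]
      refine Real.exp_le_exp.mpr ?_
      calc t * ∑ i ∈ Finset.Icc 1 k, D i ω ≤ |t * ∑ i ∈ Finset.Icc 1 k, D i ω| := le_abs_self _
        _ = |t| * |∑ i ∈ Finset.Icc 1 k, D i ω| := abs_mul _ _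
        _ ≤ |t| * ∑ i ∈ Finset.Icc 1 k, c i := by
            nlinarith [abs_nonneg t, abs_nonneg (∑ i ∈ Finset.Icc 1 k, D i ω)]
    have hfm : AEStronglyMeasurable f P := hexpSm k hk
    have hfgi : Integrable (f * g) P := hgi.bdd_mul hfm hfbdd
    -- the one-step bound, with F ((k+1)-1) = F k
    have hone : P[g|F k] ≤ᵐ[P] fun _ => Real.exp (t ^ 2 * v (k + 1)) :=
      onestep (hF_le k) hDm (hbdd _ hmem) (h0 _ hmem) (ht _ hmem) (hv _ hmem)
    have hsum : (fun ω => Real.exp (t * ∑ i ∈ Finset.Icc 1 (k + 1), D i ω)) = f * g := by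
      funext ω
      rw [Finset.sum_Icc_succ_top (Nat.one_le_iff_ne_zero.mpr (Nat.succ_ne_zero k))]
      simp only [hfdef, hgdef, Pi.mul_apply]
      rw [mul_add, Real.exp_add]
    rw [hsum]
    have key : ∫ ω, (f * g) ω ∂P ≤ Real.exp (t ^ 2 * v (k + 1)) * ∫ ω, f ω ∂P := by
      have h1 : ∫ ω, (f * g) ω ∂P = ∫ ω, (P[f * g|F k]) ω ∂P :=
        (integral_condExp (hF_le k)).symm
      have hfSM : StronglyMeasurable[F k] f := by rw [hfdef]; exact Real.continuous_exp.comp_stronglyMeasurable ((hSmeas k hk).const_mul t)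
      have h2 : P[f * g|F k] =ᵐ[P] f * P[g|F k] :=
        condExp_mul_of_stronglyMeasurable_left hfSM hfgi hgi
      have h3 : ∫ ω, (P[f * g|F k]) ω ∂P = ∫ ω, f ω * (P[g|F k]) ω ∂P :=
        integral_congr_ae h2
      rw [h1, h3]
      have hint1 : Integrable (fun ω => f ω * (P[g|F k]) ω) P :=
        (integrable_condExp).bdd_mul hfm hfbdd
      have hint2 : Integrable (fun ω => f ω * Real.exp (t ^ 2 * v (k + 1))) P :=
        (hexpSi k hk).mul_const _
      have h4 : ∫ ω, f ω * (P[g|F k]) ω ∂P ≤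
          ∫ ω, f ω * Real.exp (t ^ 2 * v (k + 1)) ∂P := by
        refine integral_mono_ae hint1 hint2 ?_
        filter_upwards [hone] with ω h
        exact mul_le_mul_of_nonneg_left h (Real.exp_nonneg _)
      refine h4.trans_eq ?_
      rw [integral_mul_const]
      ring
    refine key.trans ?_
    have := ih hk
    calc Real.exp (t ^ 2 * v (k + 1)) * ∫ ω, f ω ∂P
        ≤ Real.exp (t ^ 2 * v (k + 1)) * Real.exp (t ^ 2 * ∑ i ∈ Finset.Icc 1 k, v i) := by
          exact mul_le_mul_of_nonneg_left this (Real.exp_nonneg _)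
      _ = Real.exp (t ^ 2 * ∑ i ∈ Finset.Icc 1 (k + 1), v i) := by
          rw [← Real.exp_add, Finset.sum_Icc_succ_top (Nat.one_le_iff_ne_zero.mpr (Nat.succ_ne_zero k))]
          ring_nf

/-- Method of bounded variances (martingale concentration inequality). -/
theorem method_of_bounded_variances
    {Ω : Type*} [m0 : MeasurableSpace Ω] (P : Measure Ω) [IsProbabilityMeasure P]
    (n : ℕ) (hn : 1 ≤ n)
    (F : ℕ → MeasurableSpace Ω)
    (hF_le : ∀ i, F i ≤ m0) (hF_mono : Monotone F) (hF0 : F 0 = ⊥)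
    (Y : Ω → ℝ) (hY_int : Integrable Y P) (hY_meas : StronglyMeasurable[F n] Y)
    (D : ℕ → Ω → ℝ)
    (hD : ∀ i ∈ Finset.Icc 1 n, D i = P[Y|F i] - P[Y|F (i - 1)])
    (c : ℕ → ℝ) (hc_pos : ∀ i ∈ Finset.Icc 1 n, 0 < c i)
    (hD_bdd : ∀ i ∈ Finset.Icc 1 n, ∀ᵐ ω ∂P, |D i ω| ≤ c i)
    (V : ℝ) (hV_pos : 0 < V)
    (hV : (∑ i ∈ Finset.Icc 1 n,
      essSup (P[(fun ω => (D i ω) ^ 2)|F (i - 1)]) P) ≤ V)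
    (ε : ℝ) (hε_pos : 0 < ε)
    (hε_le : ε ≤ 2 * V / ((Finset.Icc 1 n).sup' (Finset.nonempty_Icc.mpr hn) c)) :
    (P {ω | |Y ω - ∫ ω, Y ω ∂P| > ε}).toReal ≤ 2 * Real.exp (-ε ^ 2 / (4 * V)) := by
  classical
  set cmax : ℝ := (Finset.Icc 1 n).sup' (Finset.nonempty_Icc.mpr hn) c with hcmaxdef
  have h1mem : 1 ∈ Finset.Icc 1 n := Finset.mem_Icc.mpr ⟨le_refl 1, hn⟩
  have hcmax_pos : 0 < cmax := lt_of_lt_of_le (hc_pos 1 h1mem) (Finset.le_sup' c h1mem)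
  set t : ℝ := ε / (2 * V) with htdef
  have ht_pos : 0 < t := div_pos hε_pos (by linarith)
  have htc : ∀ i ∈ Finset.Icc 1 n, t * c i ≤ 1 := by
    intro i hi
    have h1 : c i ≤ cmax := Finset.le_sup' c hi
    have h2 : t * cmax ≤ 1 := by
      rw [htdef, div_mul_eq_mul_div, div_le_one (by linarith)]
      calc ε * cmax ≤ (2 * V / cmax) * cmax := by
            nlinarith
        _ = 2 * V := by field_simp
    nlinarith [(hc_pos i hi).le]
  -- basic facts about D i
  have hDmeas : ∀ i ∈ Finset.Icc 1 n, StronglyMeasurable[F i] (D i) := by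
    intro i hi
    rw [hD i hi]
    exact stronglyMeasurable_condExp.sub
      (stronglyMeasurable_condExp.mono (hF_mono (Nat.sub_le i 1)))
  have hDm : ∀ i ∈ Finset.Icc 1 n, AEStronglyMeasurable (D i) P := fun i hi =>
    ((hDmeas i hi).mono (hF_le i)).aestronglyMeasurable
  have h0 : ∀ i ∈ Finset.Icc 1 n, P[D i|F (i - 1)] =ᵐ[P] 0 := by
    intro i hi
    rw [hD i hi]
    have hsub := condExp_sub (μ := P) (m := F (i - 1))
      (integrable_condExp (f := Y) (m := F i)) (integrable_condExp (f := Y) (m := F (i - 1)))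
    refine hsub.trans ?_
    have ha : P[P[Y|F i]|F (i - 1)] =ᵐ[P] P[Y|F (i - 1)] :=
      condExp_condExp_of_le (hF_mono (Nat.sub_le i 1)) (hF_le i)
    have hb : P[P[Y|F (i - 1)]|F (i - 1)] = P[Y|F (i - 1)] :=
      condExp_of_stronglyMeasurable (hF_le (i - 1)) stronglyMeasurable_condExp
        integrable_condExp
    rw [hb]
    filter_upwards [ha] with ω hω
    simp [hω]
  -- conditional variance bounds via essSup
  set v : ℕ → ℝ := fun i => essSup (P[(fun ω => (D i ω) ^ 2)|F (i - 1)]) P with hvdef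
  have hv : ∀ i ∈ Finset.Icc 1 n,
      P[(fun ω => D i ω ^ 2)|F (i - 1)] ≤ᵐ[P] fun _ => v i := by
    intro i hi
    have hD2m : AEStronglyMeasurable (fun ω => D i ω ^ 2) P := by
      simp only [sq]; exact (hDm i hi).mul (hDm i hi)
    have hD2i : Integrable (fun ω => D i ω ^ 2) P := by
      refine (integrable_const (c i ^ 2)).mono' hD2m ?_
      filter_upwards [hD_bdd i hi] with ω h
      simp only [Real.norm_eq_abs, abs_pow, sq_abs]
      calc D i ω ^ 2 = |D i ω| ^ 2 := (sq_abs _).symm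
        _ ≤ c i ^ 2 := by nlinarith [abs_nonneg (D i ω)]
    have hle : P[(fun ω => D i ω ^ 2)|F (i - 1)] ≤ᵐ[P] fun _ => c i ^ 2 := by
      have := condExp_mono (μ := P) (m := F (i - 1)) hD2i (integrable_const (c i ^ 2))
        (by filter_upwards [hD_bdd i hi] with ω h
            calc D i ω ^ 2 = |D i ω| ^ 2 := (sq_abs _).symm
              _ ≤ c i ^ 2 := by nlinarith [abs_nonneg (D i ω)])
      refine this.trans ?_
      rw [condExp_const (hF_le (i - 1))]
    have hbdd : Filter.IsBoundedUnder (· ≤ ·) (ae P) (P[(fun ω => D i ω ^ 2)|F (i - 1)]) :=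
      ⟨c i ^ 2, Filter.eventually_map.mpr hle⟩
    exact ae_le_essSup hbdd
  -- partial sum facts
  set S : Ω → ℝ := fun ω => ∑ i ∈ Finset.Icc 1 n, D i ω with hSdef
  have hSmeas : StronglyMeasurable[F n] S := by
    rw [hSdef]
    refine Finset.stronglyMeasurable_fun_sum _ fun i hi => ?_
    exact (hDmeas i hi).mono (hF_mono (Finset.mem_Icc.mp hi).2)
  have hSm : AEStronglyMeasurable S P := ((hSmeas).mono (hF_le n)).aestronglyMeasurable
  have hSbdd : ∀ᵐ ω ∂P, |S ω| ≤ ∑ i ∈ Finset.Icc 1 n, c i := by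
    have : ∀ᵐ ω ∂P, ∀ i ∈ Finset.Icc 1 n, |D i ω| ≤ c i := by
      rw [Filter.eventually_all_finset]
      exact hD_bdd
    filter_upwards [this] with ω h
    exact (Finset.abs_sum_le_sum_abs _ _).trans (Finset.sum_le_sum h)
  have hexpi : ∀ s : ℝ, Integrable (fun ω => Real.exp (s * S ω)) P := by
    intro s
    refine (integrable_const (Real.exp (|s| * ∑ i ∈ Finset.Icc 1 n, c i))).mono'
      (Real.continuous_exp.comp_aestronglyMeasurable (hSm.const_mul s)) ?_
    filter_upwards [hSbdd] with ω h
    rw [Real.norm_eq_abs, Real.abs_exp]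
    refine Real.exp_le_exp.mpr ?_
    calc s * S ω ≤ |s * S ω| := le_abs_self _
      _ = |s| * |S ω| := abs_mul _ _
      _ ≤ |s| * ∑ i ∈ Finset.Icc 1 n, c i := by nlinarith [abs_nonneg s, abs_nonneg (S ω)]
  -- Chernoff bound for both signs
  have hmgf : ∀ s : ℝ, |s| = t →
      ∫ ω, Real.exp (s * S ω) ∂P ≤ Real.exp (t ^ 2 * V) := by
    intro s hs
    have hts : ∀ i ∈ Finset.Icc 1 n, |s| * c i ≤ 1 := by
      intro i hi; rw [hs]; exact htc i hi
    have := chernoff_ind n F hF_le hF_mono D c hDmeas hD_bdd h0 s hts v hv n le_rfl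
    refine le_trans this ?_
    refine Real.exp_le_exp.mpr ?_
    have hs2 : s ^ 2 = t ^ 2 := by rw [← sq_abs s, hs]
    rw [hs2]
    nlinarith [sq_nonneg t]
  -- telescoping: S ω = Y ω - E[Y]
  have htel : ∀ ω, S ω = Y ω - ∫ ω, Y ω ∂P := by
    intro ω
    have hMn : P[Y|F n] = Y := condExp_of_stronglyMeasurable (hF_le n) hY_meas hY_int
    have hM0 : P[Y|F 0] = fun _ => ∫ ω, Y ω ∂P := by rw [hF0]; exact condExp_bot Y
    have h1 : S ω = ∑ j ∈ Finset.range n, D (1 + j) ω := by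
      rw [hSdef]
      simp only
      rw [← Finset.Ico_add_one_right_eq_Icc, Finset.sum_Ico_eq_sum_range]
      simp
    have h2 : ∀ j ∈ Finset.range n, D (1 + j) ω = (P[Y|F (j + 1)]) ω - (P[Y|F j]) ω := by
      intro j hj
      have hjn : j < n := Finset.mem_range.mp hj
      have hmem : 1 + j ∈ Finset.Icc 1 n := by simp only [Finset.mem_Icc]; omega
      rw [hD _ hmem]
      have e1 : 1 + j = j + 1 := by omega
      rw [Pi.sub_apply, e1, Nat.add_sub_cancel]
    rw [h1, Finset.sum_congr rfl h2, Finset.sum_range_sub (fun j => (P[Y|F j]) ω), hMn, hM0]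
  -- Markov bound for a single tail
  have hexpo : t ^ 2 * V - t * ε = -ε ^ 2 / (4 * V) := by
    rw [htdef]; field_simp; ring
  have htail : ∀ g : Ω → ℝ, Integrable (fun ω => Real.exp (t * g ω)) P →
      (∫ ω, Real.exp (t * g ω) ∂P ≤ Real.exp (t ^ 2 * V)) →
      (P {ω | ε < g ω}).toReal ≤ Real.exp (-ε ^ 2 / (4 * V)) := by
    intro g hgi hgb
    have hsub : {ω | ε < g ω} ⊆ {ω | Real.exp (t * ε) ≤ Real.exp (t * g ω)} := by
      intro ω h
      simp only [Set.mem_setOf_eq] at *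
      exact Real.exp_le_exp.mpr (by nlinarith)
    have h1 : (P {ω | ε < g ω}).toReal ≤
        (P {ω | Real.exp (t * ε) ≤ Real.exp (t * g ω)}).toReal :=
      ENNReal.toReal_mono (measure_ne_top _ _) (measure_mono hsub)
    have h2 := mul_meas_ge_le_integral_of_nonneg
      (f := fun ω => Real.exp (t * g ω)) (ae_of_all _ fun ω => (Real.exp_pos _).le)
      hgi (Real.exp (t * ε))
    have h3 : (P {ω | Real.exp (t * ε) ≤ Real.exp (t * g ω)}).toReal ≤
        Real.exp (t ^ 2 * V) / Real.exp (t * ε) := by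
      rw [le_div_iff₀ (Real.exp_pos _), mul_comm]
      exact h2.trans hgb
    refine h1.trans (h3.trans ?_)
    rw [← Real.exp_sub, hexpo]
  -- apply to both tails
  have hA : (P {ω | ε < S ω}).toReal ≤ Real.exp (-ε ^ 2 / (4 * V)) :=
    htail S (hexpi t) (hmgf t (abs_of_pos ht_pos))
  have hB : (P {ω | ε < -S ω}).toReal ≤ Real.exp (-ε ^ 2 / (4 * V)) := by
    have hfe : (fun ω => Real.exp (t * -S ω)) = fun ω => Real.exp (-t * S ω) := by
      funext ω; congr 1; ring
    refine htail (fun ω => -S ω) ?_ ?_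
    · rw [hfe]; exact hexpi (-t)
    · rw [hfe]
      exact hmgf (-t) (by rw [abs_neg, abs_of_pos ht_pos])
  -- combine
  have hsetsub : {ω | |Y ω - ∫ ω, Y ω ∂P| > ε} ⊆ {ω | ε < S ω} ∪ {ω | ε < -S ω} := by
    intro ω h
    simp only [Set.mem_setOf_eq, Set.mem_union, gt_iff_lt] at *
    rw [← htel ω] at h
    exact lt_abs.mp h
  calc (P {ω | |Y ω - ∫ ω, Y ω ∂P| > ε}).toReal
      ≤ (P ({ω | ε < S ω} ∪ {ω | ε < -S ω})).toReal :=
        ENNReal.toReal_mono (measure_ne_top _ _) (measure_mono hsetsub)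
    _ ≤ (P {ω | ε < S ω} + P {ω | ε < -S ω}).toReal :=
        ENNReal.toReal_mono
          (ENNReal.add_ne_top.mpr ⟨measure_ne_top _ _, measure_ne_top _ _⟩)
          (measure_union_le _ _)
    _ = (P {ω | ε < S ω}).toReal + (P {ω | ε < -S ω}).toReal :=
        ENNReal.toReal_add (measure_ne_top _ _) (measure_ne_top _ _)
    _ ≤ 2 * Real.exp (-ε ^ 2 / (4 * V)) := by linarith
end

section
/- Fix d ≥ 1, a finite index set K, weights p : K → ℝ with p_k > 0 for all k ∈ K, and unitary d×d complex matrices U_k for k ∈ K. Define the linear map Γ on d×d complex matrices by Γ(O) = Σ_{k∈K} p_k Σ_{j=1}^d ⟨j| U_k† O U_k |j⟩ · (U_k |j⟩⟨j| U_k†). If the family of matrices { U_k |j⟩⟨j| U_k† : k ∈ K, j ∈ {1,…,d} } spans the complex vector space of all d×d complex matrices, then Γ is bijective. -/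
open Matrix

lemma trace_stdBasisMatrix_mul {d : ℕ} (a b : Fin d) (M : Matrix (Fin d) (Fin d) ℂ) :
    Matrix.trace (Matrix.single a b 1 * M) = M b a := by
  simp [Matrix.trace, Matrix.mul_apply, Matrix.single, Matrix.diag,
    ite_and, Finset.sum_ite_eq]

lemma trace_snapshot_mul {d : ℕ} {K : Type*} (U : K → Matrix (Fin d) (Fin d) ℂ)
    (hU : ∀ k, U k ∈ Matrix.unitaryGroup (Fin d) ℂ)
    (k : K) (j : Fin d) (O : Matrix (Fin d) (Fin d) ℂ) :
    Matrix.trace (U k * Matrix.single j j 1 * (U k)ᴴ * O)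
      = ((U k)ᴴ * O * U k) j j := by
  have : Matrix.trace (U k * Matrix.single j j 1 * (U k)ᴴ * O)
      = Matrix.trace (Matrix.single j j 1 * ((U k)ᴴ * O * U k)) := by
    calc Matrix.trace (U k * Matrix.single j j 1 * (U k)ᴴ * O)
        = Matrix.trace ((U k * Matrix.single j j 1) * ((U k)ᴴ * O)) := by
          rw [Matrix.mul_assoc]
      _ = Matrix.trace (((U k)ᴴ * O) * (U k * Matrix.single j j 1)) :=
          Matrix.trace_mul_comm _ _
      _ = Matrix.trace ((((U k)ᴴ * O) * U k) * Matrix.single j j 1) := by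
          simp only [Matrix.mul_assoc]
      _ = Matrix.trace (Matrix.single j j 1 * ((U k)ᴴ * O * U k)) :=
          Matrix.trace_mul_comm _ _
  rw [this, trace_stdBasisMatrix_mul]

/-- If the ensemble of unitaries is tomographically complete (the snapshot matrices span
all d×d matrices) and the weights are positive, then the shadow channel Γ is bijective. -/
theorem shadow_channel_bijective
    (d : ℕ) (hd : 1 ≤ d) {K : Type*} [Fintype K]
    (p : K → ℝ) (hp_pos : ∀ k, 0 < p k)
    (U : K → Matrix (Fin d) (Fin d) ℂ)
    (hU : ∀ k, U k ∈ Matrix.unitaryGroup (Fin d) ℂ)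
    (Γ : Matrix (Fin d) (Fin d) ℂ →ₗ[ℂ] Matrix (Fin d) (Fin d) ℂ)
    (hΓ : ∀ O, Γ O = ∑ k, ∑ j, ((p k : ℂ) * (((U k)ᴴ * O * U k) j j)) •
        (U k * Matrix.single j j 1 * (U k)ᴴ))
    (hspan : Submodule.span ℂ
        {A : Matrix (Fin d) (Fin d) ℂ |
          ∃ k j, A = U k * Matrix.single j j 1 * (U k)ᴴ} = ⊤) :
    Function.Bijective Γ := by
  have hinj : Function.Injective Γ := by
    rw [← LinearMap.ker_eq_bot, LinearMap.ker_eq_bot']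
    intro O hO
    set c : K → Fin d → ℂ := fun k j => ((U k)ᴴ * O * U k) j j with hc
    -- snapshot matrices are Hermitian
    have hherm : ∀ k (j : Fin d),
        (U k * Matrix.single j j 1 * (U k)ᴴ)ᴴ
          = U k * Matrix.single j j 1 * (U k)ᴴ := by
      intro k j
      have hE : (Matrix.single j j (1 : ℂ))ᴴ = Matrix.single j j 1 := by
        ext a b
        simp [Matrix.conjTranspose_apply, Matrix.single, and_comm]
      simp [Matrix.conjTranspose_mul, hE, Matrix.mul_assoc]
    -- ⟨O, A_kj⟩ = conj c
    have hip : ∀ k (j : Fin d),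
        Matrix.trace (Oᴴ * (U k * Matrix.single j j 1 * (U k)ᴴ))
          = star (c k j) := by
      intro k j
      have := Matrix.trace_conjTranspose
        ((Oᴴ * (U k * Matrix.single j j 1 * (U k)ᴴ))ᴴ)
      rw [Matrix.conjTranspose_conjTranspose] at this
      rw [this, Matrix.conjTranspose_mul, Matrix.conjTranspose_conjTranspose,
        hherm, trace_snapshot_mul U hU]
    -- 0 = ⟨O, Γ O⟩ = Σ p_k |c|²
    have key : (0 : ℂ) = ∑ k, ∑ j, (p k : ℂ) * Complex.normSq (c k j) := by
      have h0 : Matrix.trace (Oᴴ * Γ O) = 0 := by rw [hO]; simp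
      rw [hΓ O] at h0
      rw [Finset.mul_sum] at h0
      simp only [Finset.mul_sum, Matrix.mul_smul, Matrix.trace_sum,
        Matrix.trace_smul] at h0
      rw [← h0]
      apply Finset.sum_congr rfl
      intro k _
      apply Finset.sum_congr rfl
      intro j _
      rw [hip k j]
      rw [smul_eq_mul]
      rw [show ((U k)ᴴ * O * U k) j j = c k j from rfl]
      rw [show star (c k j) = (starRingEnd ℂ) (c k j) from rfl, mul_assoc,
        Complex.mul_conj]
    -- coefficients vanish
    have hreal : (0 : ℝ) = ∑ k, ∑ j, (p k) * Complex.normSq (c k j) := by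
      have := congrArg Complex.re key
      simpa using this
    have hczero : ∀ k (j : Fin d), c k j = 0 := by
      have hnn : ∀ k ∈ Finset.univ (α := K),
          (0:ℝ) ≤ ∑ j, (p k) * Complex.normSq (c k j) := by
        intro k _
        apply Finset.sum_nonneg
        intro j _
        exact mul_nonneg (hp_pos k).le (Complex.normSq_nonneg _)
      have h1 := (Finset.sum_eq_zero_iff_of_nonneg hnn).mp hreal.symm
      intro k j
      have hnn2 : ∀ j ∈ Finset.univ (α := Fin d),
          (0:ℝ) ≤ (p k) * Complex.normSq (c k j) := fun j _ =>
        mul_nonneg (hp_pos k).le (Complex.normSq_nonneg _)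
      have h2 := (Finset.sum_eq_zero_iff_of_nonneg hnn2).mp (h1 k (Finset.mem_univ k))
        j (Finset.mem_univ j)
      have := (mul_eq_zero.mp h2).resolve_left (ne_of_gt (hp_pos k))
      exact Complex.normSq_eq_zero.mp this
    -- the functional A ↦ trace (A * O) vanishes on a spanning set
    set φ : Matrix (Fin d) (Fin d) ℂ →ₗ[ℂ] ℂ :=
      (Matrix.traceLinearMap (Fin d) ℂ ℂ) ∘ₗ (LinearMap.mulRight ℂ O) with hφ
    have hφzero : φ = 0 := by
      apply LinearMap.ext
      intro A
      have hA : A ∈ Submodule.span ℂ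
          {A : Matrix (Fin d) (Fin d) ℂ |
            ∃ k j, A = U k * Matrix.single j j 1 * (U k)ᴴ} := by
        rw [hspan]; trivial
      have : Submodule.span ℂ
          {A : Matrix (Fin d) (Fin d) ℂ |
            ∃ k j, A = U k * Matrix.single j j 1 * (U k)ᴴ}
          ≤ LinearMap.ker φ := by
        rw [Submodule.span_le]
        rintro B ⟨k, j, rfl⟩
        simp only [SetLike.mem_coe, LinearMap.mem_ker, hφ, LinearMap.comp_apply,
          LinearMap.mulRight_apply, Matrix.traceLinearMap_apply]
        rw [trace_snapshot_mul U hU]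
        exact hczero k j
      exact this hA
    ext i j
    have := congrArg (fun ψ => ψ (Matrix.single j i 1)) hφzero
    simp only [hφ, LinearMap.comp_apply, LinearMap.mulRight_apply,
      Matrix.traceLinearMap_apply, LinearMap.zero_apply] at this
    rw [trace_stdBasisMatrix_mul] at this
    simpa using this
  exact ⟨hinj, LinearMap.injective_iff_surjective.mp hinj⟩
end
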